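/- Let k be a prime dividing q − 1, let β be a nonzero proper element of F_{q^n}, and suppose the multiplicative order of β is e = k^v · r with gcd(k,r) = 1. Then: (i) for every i ≥ 0, the order of the minimal polynomial m_{β^{k^i}} of β^{k^i} over Fq equals k^{max(v−i,0)} · r; (ii) the minimal polynomials m_{β^{k^0}}, m_{β^{k^1}}, …, m_{β^{k^{v−1}}} are pairwise distinct and each is distinct from every m_{β^{k^i}} with i ≥ v; and (iii) m_{β^{k^v}} = m_{β^{k^{v + ord_r(k)}}}, where ord_r(k) is the multiplicative order of k modulo r. -/
import Mathlib


open Polynomial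

/-- The order of a polynomial over a finite field: the least positive integer `e`
such that `f ∣ X^e − 1`. -/
noncomputable def polyOrder {F : Type*} [Field F] (f : Polynomial F) : ℕ :=
  sInf {e : ℕ | 0 < e ∧ f ∣ Polynomial.X ^ e - 1}

/-- Let `k` be a prime dividing `q − 1`, `β` a nonzero proper element of
`F_{q^n}` of multiplicative order `e = k^v · r` with `gcd(k,r) = 1`. Then: (i) for every
`i ≥ 0` the order of `m_{β^{k^i}}` equals `k^{max(v−i,0)} · r`; (ii) the minimal polynomials
`m_{β^{k^0}}, …, m_{β^{k^{v−1}}}` are pairwise distinct and each is distinct from every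
`m_{β^{k^i}}` with `i ≥ v`; (iii) `m_{β^{k^v}} = m_{β^{k^{v + ord_r(k)}}}`. -/
theorem stmt17 {F E : Type*} [Field F] [Fintype F] [Field E] [Algebra F E]
    (n : ℕ) (hn : 0 < n) (hrank : Module.finrank F E = n)
    (β : E) (hβ0 : β ≠ 0) (hproper : (minpoly F β).natDegree = n)
    (k : ℕ) (hkprime : Nat.Prime k) (hkq : k ∣ Fintype.card F - 1)
    (v r : ℕ) (he : orderOf β = k ^ v * r) (hgcd : Nat.gcd k r = 1) :
    (∀ i : ℕ, polyOrder (minpoly F (β ^ k ^ i)) = k ^ (v - i) * r) ∧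
    (∀ i j : ℕ, i < v → j < v → i ≠ j →
        minpoly F (β ^ k ^ i) ≠ minpoly F (β ^ k ^ j)) ∧
    (∀ i j : ℕ, i < v → v ≤ j →
        minpoly F (β ^ k ^ i) ≠ minpoly F (β ^ k ^ j)) ∧
    minpoly F (β ^ k ^ v) = minpoly F (β ^ k ^ (v + orderOf (k : ZMod r))) := by
  classical
  haveI : Module.Finite F E := Module.finite_of_finrank_pos (by rw [hrank]; exact hn)
  haveI : Finite E := Module.finite_of_finite F
  -- β has positive order
  have hordβ : 0 < orderOf β := by
    have : orderOf (Units.mk0 β hβ0 : E) = orderOf (Units.mk0 β hβ0) := orderOf_units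
    rw [show β = (Units.mk0 β hβ0 : E) from rfl, this]
    exact orderOf_pos _
  have hk1 : 1 < k := hkprime.one_lt
  have hkpos : 0 < k := hkprime.pos
  have hr : 0 < r := by
    rcases Nat.eq_zero_or_pos r with h | h
    · rw [he, h, mul_zero] at hordβ; omega
    · exact h
  -- key: polyOrder of minpoly = orderOf
  have key : ∀ γ : E, γ ≠ 0 → polyOrder (minpoly F γ) = orderOf γ := by
    intro γ hγ0
    have hγfin : 0 < orderOf γ := by
      have h1 : orderOf (Units.mk0 γ hγ0 : E) = orderOf (Units.mk0 γ hγ0) := orderOf_units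
      rw [show γ = (Units.mk0 γ hγ0 : E) from rfl, h1]
      exact orderOf_pos _
    have hset : {e : ℕ | 0 < e ∧ minpoly F γ ∣ X ^ e - 1} = {e | 0 < e ∧ γ ^ e = 1} := by
      ext e
      simp only [Set.mem_setOf_eq, minpoly.dvd_iff, map_sub, map_pow, aeval_X, map_one,
        sub_eq_zero]
    unfold polyOrder
    rw [hset]
    apply le_antisymm
    · exact Nat.sInf_le ⟨hγfin, pow_orderOf_eq_one γ⟩
    · refine le_csInf ⟨orderOf γ, hγfin, pow_orderOf_eq_one γ⟩ ?_
      intro e he'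
      exact Nat.le_of_dvd he'.1 (orderOf_dvd_of_pow_eq_one he'.2)
  -- order of β^(k^i)
  have hord_i : ∀ i : ℕ, orderOf (β ^ k ^ i) = k ^ (v - i) * r := by
    intro i
    rw [orderOf_pow' β (pow_ne_zero i hkpos.ne'), he]
    rcases le_or_gt i v with h | h
    · have hgcd' : Nat.gcd (k ^ v * r) (k ^ i) = k ^ i :=
        Nat.gcd_eq_right (dvd_mul_of_dvd_left (pow_dvd_pow k h) r)
      rw [hgcd']
      have hv : k ^ v = k ^ (v - i) * k ^ i := by
        rw [← pow_add]; congr 1; omega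
      rw [hv, mul_comm (k ^ (v - i)) (k ^ i), mul_assoc,
        Nat.mul_div_cancel_left _ (pow_pos hkpos i)]
    · have hi : k ^ i = k ^ v * k ^ (i - v) := by
        rw [← pow_add]; congr 1; omega
      have hcop : Nat.gcd r (k ^ (i - v)) = 1 :=
        Nat.Coprime.symm (Nat.Coprime.pow_left _ hgcd)
      rw [hi, Nat.gcd_mul_left, hcop, mul_one,
        Nat.mul_div_cancel_left _ (pow_pos hkpos v)]
      have : v - i = 0 := by omega
      rw [this, pow_zero, one_mul]
  have hpoly_i : ∀ i : ℕ, polyOrder (minpoly F (β ^ k ^ i)) = k ^ (v - i) * r := by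
    intro i; rw [key _ (pow_ne_zero _ hβ0), hord_i]
  refine ⟨hpoly_i, ?_, ?_, ?_⟩
  · intro i j hi hj hij heq
    have := hpoly_i i
    rw [heq, hpoly_i j] at this
    have h2 : k ^ (v - j) = k ^ (v - i) := Nat.eq_of_mul_eq_mul_right hr this
    have := Nat.pow_right_injective hk1 h2
    omega
  · intro i j hi hj heq
    have h1 := hpoly_i i
    rw [heq, hpoly_i j] at h1
    have hvj : v - j = 0 := by omega
    rw [hvj, pow_zero, one_mul] at h1
    have h1' : (1 : ℕ) * r = k ^ (v - i) * r := by rw [one_mul]; exact h1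
    have h2 : k ^ (v - i) = 1 := (Nat.eq_of_mul_eq_mul_right hr h1').symm
    have : v - i = 0 := by
      by_contra h
      have := Nat.one_lt_pow h hk1
      omega
    omega
  · set t := orderOf ((k : ℕ) : ZMod r) with ht
    have hmod : k ^ t ≡ 1 [MOD r] := by
      haveI : NeZero r := ⟨hr.ne'⟩
      have h1 : ((k : ZMod r)) ^ t = 1 := pow_orderOf_eq_one _
      have h2 : ((k ^ t : ℕ) : ZMod r) = ((1 : ℕ) : ZMod r) := by push_cast; simpa using h1
      exact (ZMod.natCast_eq_natCast_iff _ _ _).mp h2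
    have hγord : orderOf (β ^ k ^ v) = r := by
      have := hord_i v
      simpa using this
    have hkt1 : 1 ≤ k ^ t := Nat.one_le_pow _ _ hkpos
    obtain ⟨q, hq⟩ : r ∣ k ^ t - 1 := (Nat.modEq_iff_dvd' hkt1).mp hmod.symm
    have hkt : k ^ t = r * q + 1 := by omega
    have har : (β ^ k ^ v) ^ r = 1 := by rw [← hγord]; exact pow_orderOf_eq_one _
    have hβeq : β ^ k ^ (v + t) = β ^ k ^ v := by
      have h1 : k ^ (v + t) = k ^ v * k ^ t := pow_add k v t
      rw [h1, pow_mul, hkt, pow_add, pow_mul, har, one_pow, one_mul, pow_one]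
    rw [hβeq]
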